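/- Let Σ ∈ SPD(n), W, V ∈ Sym(n), γ(t) := Exp_Σ(tW) and X(t) := P_t V P_tᵀ. Then X(0) = V, X(t) ∈ Sym(n) for all t, X is differentiable (entrywise), and X'(t) = ½·(γ'(t)·γ(t)⁻¹·X(t) + X(t)·γ(t)⁻¹·γ'(t)) for all t ∈ ℝ. This is the parallel-transport equation of the affine-invariant connection along γ, so t ↦ P_t V P_tᵀ is the parallel vector field along the affine-invariant geodesic γ with initial value V. -/

import Mathlib

open Matrix

attribute [local instance] Matrix.linftyOpNormedAddCommGroup Matrix.linftyOpNormedSpace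
  Matrix.linftyOpNormedRing Matrix.linftyOpNormedAlgebra

private lemma entry_hasDerivAt {n : ℕ} {f : ℝ → Matrix (Fin n) (Fin n) ℝ}
    {f' : Matrix (Fin n) (Fin n) ℝ} {t : ℝ} (h : HasDerivAt f f' t) (i j : Fin n) :
    HasDerivAt (fun s => f s i j) (f' i j) t := by
  let L : Matrix (Fin n) (Fin n) ℝ →ₗ[ℝ] ℝ :=
    { toFun := fun M => M i j, map_add' := fun _ _ => rfl, map_smul' := fun _ _ => rfl }
  exact (L.toContinuousLinearMap.hasFDerivAt).comp_hasDerivAt t h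

theorem spd_parallel_field (n : ℕ) (hn : 1 ≤ n) (Sg W V S : Matrix (Fin n) (Fin n) ℝ)
    (hSg : Sg.PosDef) (hW : W.IsSymm) (hV : V.IsSymm) (hS : S.PosDef) (hSS : S * S = Sg)
    (γ : ℝ → Matrix (Fin n) (Fin n) ℝ)
    (hγ : ∀ t : ℝ, γ t = S * NormedSpace.exp (S⁻¹ * (t • W) * S⁻¹) * S)
    (P : ℝ → Matrix (Fin n) (Fin n) ℝ)
    (hP : ∀ t : ℝ, P t = S * NormedSpace.exp ((t / 2) • (S⁻¹ * W * S⁻¹)) * S⁻¹)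
    (X : ℝ → Matrix (Fin n) (Fin n) ℝ)
    (hX : ∀ t : ℝ, X t = P t * V * (P t)ᵀ) :
    X 0 = V ∧ (∀ t : ℝ, (X t).IsSymm) ∧
      ∃ γ' X' : ℝ → Matrix (Fin n) (Fin n) ℝ,
        (∀ (t : ℝ) (i j : Fin n), HasDerivAt (fun s : ℝ => γ s i j) (γ' t i j) t) ∧
        (∀ (t : ℝ) (i j : Fin n), HasDerivAt (fun s : ℝ => X s i j) (X' t i j) t) ∧
        ∀ t : ℝ, X' t =
          (1 / 2 : ℝ) • (γ' t * (γ t)⁻¹ * X t + X t * (γ t)⁻¹ * γ' t) := by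
  have hdet : IsUnit S.det := isUnit_iff_ne_zero.mpr hS.det_pos.ne'
  haveI : Invertible S := S.invertibleOfIsUnitDet hdet
  have hSt : Sᵀ = S := by
    ext i j; simpa using congrFun (congrFun hS.1 i) j
  set A : Matrix (Fin n) (Fin n) ℝ := S⁻¹ * W * S⁻¹ with hAdef
  have hSit : (S⁻¹)ᵀ = S⁻¹ := by rw [Matrix.transpose_nonsing_inv, hSt]
  have hAt : Aᵀ = A := by
    rw [hAdef, Matrix.transpose_mul, Matrix.transpose_mul, hSit, hW.eq]
    simp [Matrix.mul_assoc]
  set E : ℝ → Matrix (Fin n) (Fin n) ℝ := fun t => NormedSpace.exp ((t / 2) • A) with hEdef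
  set F : ℝ → Matrix (Fin n) (Fin n) ℝ := fun t => NormedSpace.exp (t • A) with hFdef
  have hEF : ∀ t : ℝ, F t = E t * E t := by
    intro t
    have h : t • A = (t / 2) • A + (t / 2) • A := by rw [← add_smul]; norm_num
    rw [hFdef]; dsimp only
    rw [h]
    exact Matrix.exp_add_of_commute _ _ (Commute.refl _)
  -- commutation lemmas
  have hAE : ∀ t : ℝ, A * E t = E t * A := fun t =>
    (((Commute.refl A).smul_right (t / 2)).exp_right).eq
  have hAF : ∀ t : ℝ, A * F t = F t * A := fun t =>
    (((Commute.refl A).smul_right t).exp_right).eq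
  have hAFinv : ∀ t : ℝ, A * (F t)⁻¹ = (F t)⁻¹ * A := by
    intro t
    rw [hFdef]; dsimp only
    rw [← Matrix.exp_neg]
    exact ((((Commute.refl A).smul_right t).neg_right).exp_right).eq
  have hinvE : ∀ t : ℝ, Invertible (E t) := fun t =>
    (E t).invertibleOfIsUnitDet ((Matrix.isUnit_iff_isUnit_det _).mp (Matrix.isUnit_exp _))
  have hinvF : ∀ t : ℝ, Invertible (F t) := fun t =>
    (F t).invertibleOfIsUnitDet ((Matrix.isUnit_iff_isUnit_det _).mp (Matrix.isUnit_exp _))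
  have hγeq : γ = fun s => S * F s * S := by
    funext s
    rw [hγ s, hFdef]
    congr 2
    rw [Matrix.mul_smul, Matrix.smul_mul]
  have hEt : ∀ t : ℝ, (E t)ᵀ = E t := by
    intro t; rw [hEdef]; dsimp only
    rw [← Matrix.exp_transpose, Matrix.transpose_smul, hAt]
  have hXeq : X = fun s => S * E s * (S⁻¹ * V * S⁻¹) * (E s * S) := by
    funext s
    rw [hX s, hP s]
    have hPt : (S * NormedSpace.exp ((s / 2) • A) * S⁻¹)ᵀ = S⁻¹ * E s * S := by
      rw [Matrix.transpose_mul, Matrix.transpose_mul, hSit, hSt]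
      rw [show (NormedSpace.exp ((s / 2) • A))ᵀ = E s from hEt s]
      rw [Matrix.mul_assoc]
    rw [hPt]
    rw [show NormedSpace.exp ((s / 2) • A) = E s from rfl]
    simp only [Matrix.mul_assoc]
  refine ⟨?_, ?_, ?_⟩
  · rw [hX 0, hP 0]
    have : ((0 : ℝ) / 2) • A = 0 := by norm_num
    rw [this, NormedSpace.exp_zero]
    simp [Matrix.mul_inv_of_invertible]
  · intro t
    rw [Matrix.IsSymm, hX t]
    simp [Matrix.transpose_mul, Matrix.transpose_transpose, hV.eq, Matrix.mul_assoc]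
  · refine ⟨fun t => S * (F t * A) * S,
      fun t => (1 / 2 : ℝ) • (S * (A * E t) * (S⁻¹ * V * S⁻¹) * (E t * S)
        + S * E t * (S⁻¹ * V * S⁻¹) * (A * E t * S)), ?_, ?_, ?_⟩
    · intro t i j
      rw [hγeq]
      exact entry_hasDerivAt
        (((hasDerivAt_exp_smul_const (𝕂 := ℝ) A t).const_mul S).mul_const S) i j
    · intro t i j
      have hE' : HasDerivAt E ((1 / 2 : ℝ) • (E t * A)) t := by
        have h1 := hasDerivAt_exp_smul_const (𝕂 := ℝ) A (t / 2)
        have h2 : HasDerivAt (fun s : ℝ => s / 2) (1 / 2 : ℝ) t := by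
          simpa using (hasDerivAt_id t).div_const 2
        have h3 := HasDerivAt.scomp t h1 h2
        exact h3
      have hD := ((hE'.const_mul S).mul_const (S⁻¹ * V * S⁻¹)).mul (hE'.mul_const S)
      have heq : S * ((1 / 2 : ℝ) • (E t * A)) * (S⁻¹ * V * S⁻¹) * (E t * S)
          + S * E t * (S⁻¹ * V * S⁻¹) * ((1 / 2 : ℝ) • (E t * A) * S)
          = (1 / 2 : ℝ) • (S * (A * E t) * (S⁻¹ * V * S⁻¹) * (E t * S)
            + S * E t * (S⁻¹ * V * S⁻¹) * (A * E t * S)) := by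
        rw [hAE t]
        simp only [Matrix.mul_smul, Matrix.smul_mul, smul_add, Matrix.mul_assoc]
      rw [hXeq]
      exact entry_hasDerivAt (heq ▸ hD) i j
    · intro t
      haveI := hinvE t; haveI := hinvF t
      have hXt : X t = S * E t * (S⁻¹ * V * S⁻¹) * (E t * S) := by rw [hXeq]
      have hγt : γ t = S * F t * S := by rw [hγeq]
      have hγinv : (γ t)⁻¹ = S⁻¹ * ((F t)⁻¹ * S⁻¹) := by
        rw [hγt, Matrix.mul_inv_rev, Matrix.mul_inv_rev]
      have h1 : S * (F t * A) * S * (γ t)⁻¹ = S * A * S⁻¹ := by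
        rw [hγinv]
        simp only [Matrix.mul_assoc, Matrix.mul_inv_cancel_left_of_invertible,
          Matrix.inv_mul_cancel_left_of_invertible]
        rw [← Matrix.mul_assoc A, hAFinv t, Matrix.mul_assoc]
        simp only [Matrix.mul_inv_cancel_left_of_invertible]
      have h2 : (γ t)⁻¹ * (S * (F t * A) * S) = S⁻¹ * (A * S) := by
        rw [hγinv]
        simp only [Matrix.mul_assoc, Matrix.mul_inv_cancel_left_of_invertible,
          Matrix.inv_mul_cancel_left_of_invertible]
      have e1 : S * (F t * A) * S * (γ t)⁻¹ * X t
          = S * (A * E t) * (S⁻¹ * V * S⁻¹) * (E t * S) := by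
        rw [h1, hXt]
        simp only [Matrix.mul_assoc, Matrix.inv_mul_cancel_left_of_invertible]
      have e2 : X t * (γ t)⁻¹ * (S * (F t * A) * S)
          = S * E t * (S⁻¹ * V * S⁻¹) * (A * E t * S) := by
        rw [Matrix.mul_assoc, h2, hXt]
        simp only [Matrix.mul_assoc, Matrix.mul_inv_cancel_left_of_invertible]
        rw [← Matrix.mul_assoc A (E t) S, hAE t, Matrix.mul_assoc (E t) A S]
      rw [e1, e2]
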